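/- Let (Ω, ℱ, ℙ, σ) be a measure-preserving dynamical system and let f : Ω → ℋ be the generator of a random circle homeomorphism. Then for every x₀ ∈ [0,1), every ω ∈ Ω and every n ≥ 1, the visit frequency with reference point 0 equals the binary coding frequency: V_f(n, ω, x₀, 0) = B_f(n, ω, x₀). -/
import Mathlib


open MeasureTheory

/-- Iterated composition of a random lift:
`iterLift σ F n ω = F_{σ^{n-1} ω} ∘ ⋯ ∘ F_{σ ω} ∘ F_ω`. -/
def iterLift {Ω : Type*} (σ : Ω → Ω) (F : Ω → ℝ → ℝ) : ℕ → Ω → ℝ → ℝ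
  | 0, _, x => x
  | n + 1, ω, x => iterLift σ F n (σ ω) (F ω x)

/-- Iterated composition of the induced interval maps `f̂_ω = Int.fract ∘ F_ω` on `[0,1)`:
`iterHat σ F n ω = f̂_{σ^{n-1} ω} ∘ ⋯ ∘ f̂_ω`. -/
noncomputable def iterHat {Ω : Type*} (σ : Ω → Ω) (F : Ω → ℝ → ℝ) : ℕ → Ω → ℝ → ℝ
  | 0, _, x => x
  | n + 1, ω, x => iterHat σ F n (σ ω) (Int.fract (F ω x))

lemma iterHat_succ_last {Ω : Type*} (σ : Ω → Ω) (F : Ω → ℝ → ℝ) :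
    ∀ (k : ℕ) (ω : Ω) (x : ℝ),
      iterHat σ F (k + 1) ω x = Int.fract (F (σ^[k] ω) (iterHat σ F k ω x))
  | 0, ω, x => rfl
  | k + 1, ω, x => by
      show iterHat σ F (k + 1) (σ ω) (Int.fract (F ω x)) = _
      rw [iterHat_succ_last σ F k (σ ω) (Int.fract (F ω x))]
      rfl

lemma iterHat_mem {Ω : Type*} (σ : Ω → Ω) (F : Ω → ℝ → ℝ) :
    ∀ (k : ℕ) (ω : Ω) (x : ℝ), x ∈ Set.Ico (0 : ℝ) 1 →
      iterHat σ F k ω x ∈ Set.Ico (0 : ℝ) 1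
  | 0, ω, x, hx => hx
  | k + 1, ω, x, hx =>
      iterHat_mem σ F k (σ ω) _ ⟨Int.fract_nonneg _, Int.fract_lt_one _⟩

lemma key_iff (F : ℝ → ℝ) (hmono : StrictMono F)
    (hdeg : ∀ x : ℝ, F (x + 1) = F x + 1) (hstd : F 0 ∈ Set.Ico (0 : ℝ) 1)
    (c : ℝ) (hc : c ∈ Set.Ico (0 : ℝ) 1) (hFc : Int.fract (F c) = 0)
    (x : ℝ) (hx : x ∈ Set.Ico (0 : ℝ) 1) :
    Int.fract (F x) < Int.fract (F 0) ↔ (Int.fract (F 0) ≠ 0 ∧ x ∈ Set.Ico c 1) := by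
  have hF0 : Int.fract (F 0) = F 0 := Int.fract_eq_self.2 hstd
  rw [hF0]
  by_cases h0 : F 0 = 0
  · simp only [h0, ne_eq, not_true_eq_false, false_and, iff_false, not_lt]
    exact Int.fract_nonneg _
  · have h0pos : 0 < F 0 := lt_of_le_of_ne hstd.1 (Ne.symm h0)
    have hcpos : 0 < c := by
      rcases lt_or_eq_of_le hc.1 with h | h
      · exact h
      · exfalso
        rw [← h] at hFc
        rw [Int.fract_eq_self.2 hstd] at hFc
        exact h0 hFc
    have hFc1 : F c = 1 := by
      have hint : F c = ↑⌊F c⌋ := by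
        have := Int.self_sub_fract (F c)
        rw [hFc] at this; linarith
      have h1 : F 0 < F c := hmono hcpos
      have h2 : F c < F 0 + 1 := by
        have : F c < F 1 := hmono hc.2
        have h1' : F 1 = F 0 + 1 := by have := hdeg 0; simpa using this
        linarith
      have hfl : (0 : ℝ) < ↑⌊F c⌋ := by rw [← hint]; linarith
      have hfl2 : (↑⌊F c⌋ : ℝ) < 2 := by rw [← hint]; linarith [hstd.2]
      have : ⌊F c⌋ = 1 := by
        have h1 : (0 : ℤ) < ⌊F c⌋ := by exact_mod_cast hfl
        have h2 : ⌊F c⌋ < 2 := by exact_mod_cast hfl2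
        omega
      rw [hint, this]; norm_num
    constructor
    · rintro hlt
      refine ⟨h0, ?_, hx.2⟩
      · by_contra hxc
        push_neg at hxc
        have hFx : F x < 1 := hFc1 ▸ hmono hxc
        have hFx0 : 0 ≤ F x := le_trans hstd.1 (hmono.monotone hx.1)
        rw [Int.fract_eq_self.2 ⟨hFx0, hFx⟩] at hlt
        exact absurd hlt (not_lt.2 (hmono.monotone hx.1))
    · rintro ⟨-, hcx, hx1⟩
      have h1le : 1 ≤ F x := hFc1 ▸ hmono.monotone hcx
      have hlt1 : F x < F 0 + 1 := by
        have : F x < F 1 := hmono hx1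
        have h1' : F 1 = F 0 + 1 := by have := hdeg 0; simpa using this
        linarith
      have hfr : Int.fract (F x) = F x - 1 := by
        have hh := Int.fract_sub_intCast (F x) (1 : ℤ)
        push_cast at hh
        rw [← hh, Int.fract_eq_self.2 ⟨by linarith, by linarith [hstd.2]⟩]
      rw [hfr]; linarith

/-- `S_ω`, the indicator function of the right interval `J_ω`, where
`J_ω = [c_ω, 1)` if `f̂_ω(0) ≠ 0` and `J_ω = ∅` if `f̂_ω(0) = 0`, and where
`c_ω = f_ω⁻¹(0)` is described by the data `c : Ω → ℝ`. -/
noncomputable def rightInd {Ω : Type*} (F : Ω → ℝ → ℝ) (c : Ω → ℝ) (ω : Ω) : ℝ → ℝ :=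
  Set.indicator (if Int.fract (F ω 0) ≠ 0 then Set.Ico (c ω) 1 else (∅ : Set ℝ)) fun _ => 1

/-- The `n`-th binary coding frequency
`B_f(n, ω, x₀) = (1/n) ∑_{k=0}^{n-1} S_{σ^k ω}(f̂^{(k)}_ω(x₀))`. -/
noncomputable def binFreq {Ω : Type*} (σ : Ω → Ω) (F : Ω → ℝ → ℝ) (c : Ω → ℝ)
    (n : ℕ) (ω : Ω) (x₀ : ℝ) : ℝ :=
  (∑ k ∈ Finset.range n, rightInd F c (σ^[k] ω) (iterHat σ F k ω x₀)) / n

/-- Membership of `x` in the positively oriented circular arc `[z, y)`, with all points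
represented in `[0,1)`; `[z, z) = ∅`. -/
def inArc (z y x : ℝ) : Prop :=
  if z ≤ y then z ≤ x ∧ x < y else (z ≤ x ∨ x < y)

open Classical in
/-- The `n`-th visit frequency
`V_f(n, ω, x₀, z) = (1/n) #{1 ≤ i ≤ n : f^{(i)}_ω(x₀) ∈ [z, f_{σ^{i-1}ω}(z))}`,
with circle points represented in `[0,1)` and `f_ω = Int.fract ∘ F_ω` on `[0,1)`. -/
noncomputable def visitFreq {Ω : Type*} (σ : Ω → Ω) (F : Ω → ℝ → ℝ)
    (n : ℕ) (ω : Ω) (x₀ z : ℝ) : ℝ :=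
  (((Finset.Icc 1 n).filter fun i =>
      inArc z (Int.fract (F (σ^[i - 1] ω) z)) (iterHat σ F i ω x₀)).card : ℝ) / n

/-- for a random circle homeomorphism over a measure-preserving system,
the visit frequency with reference point `0` equals the binary coding frequency:
`V_f(n, ω, x₀, 0) = B_f(n, ω, x₀)` for every `x₀ ∈ [0,1)`, every `ω` and every `n ≥ 1`. -/
theorem visit_eq_binary
    {Ω : Type*} [MeasurableSpace Ω] (ℙ : Measure Ω) [IsProbabilityMeasure ℙ]
    (σ : Ω → Ω) (hσ : MeasurePreserving σ ℙ ℙ)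
    (F : Ω → ℝ → ℝ) (hmeas : Measurable (Function.uncurry F))
    (hmono : ∀ ω, StrictMono (F ω)) (hcont : ∀ ω, Continuous (F ω))
    (hsurj : ∀ ω, Function.Surjective (F ω))
    (hdeg : ∀ ω (x : ℝ), F ω (x + 1) = F ω x + 1)
    (hstd : ∀ ω, F ω 0 ∈ Set.Ico (0 : ℝ) 1)
    (c : Ω → ℝ)
    (hc : ∀ ω, c ω ∈ Set.Ico (0 : ℝ) 1 ∧ Int.fract (F ω (c ω)) = 0) :
    ∀ x₀ ∈ Set.Ico (0 : ℝ) 1, ∀ (ω : Ω) (n : ℕ), 1 ≤ n →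
      visitFreq σ F n ω x₀ 0 = binFreq σ F c n ω x₀ := by
  classical
  intro x₀ hx₀ ω n hn
  rw [visitFreq, binFreq]
  congr 1
  rw [Finset.card_filter]
  push_cast
  rw [← Finset.Ico_add_one_right_eq_Icc, Finset.sum_Ico_eq_sum_range]
  simp only [Nat.add_sub_cancel, Nat.succ_sub_one]
  apply Finset.sum_congr rfl
  intro k hk
  have h1k : 1 + k - 1 = k := by omega
  rw [h1k, show 1 + k = k + 1 from by omega, iterHat_succ_last σ F k ω x₀]
  set ω' := σ^[k] ω with hω'
  set x := iterHat σ F k ω x₀ with hxdef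
  have hx : x ∈ Set.Ico (0 : ℝ) 1 := iterHat_mem σ F k ω x₀ hx₀
  have harc : inArc 0 (Int.fract (F ω' 0)) (Int.fract (F ω' x)) ↔
      Int.fract (F ω' x) < Int.fract (F ω' 0) := by
    rw [inArc, if_pos (Int.fract_nonneg _)]
    exact ⟨fun h => h.2, fun h => ⟨Int.fract_nonneg _, h⟩⟩
  have hkey := key_iff (F ω') (hmono ω') (hdeg ω') (hstd ω') (c ω') (hc ω').1 (hc ω').2 x hx
  have hmem : (x ∈ (if Int.fract (F ω' 0) ≠ 0 then Set.Ico (c ω') 1 else (∅ : Set ℝ))) ↔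
      (Int.fract (F ω' 0) ≠ 0 ∧ x ∈ Set.Ico (c ω') 1) := by
    split_ifs with h <;> simp [h]
  have hiff := harc.trans (hkey.trans hmem.symm)
  rw [rightInd, Set.indicator_apply]
  simp only [hiff]
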